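/- Divergence-form representation of the determinant: if y : ℝ³ → ℝ³ is twice continuously differentiable, then for every x ∈ ℝ³, det ∇y(x) = (1/3) ∑_{i,j=1}^{3} ∂_j ( y_i (cof ∇y)_{ij} )(x). -/

import Mathlib

open Matrix

/-- Cofactor matrix: the transpose of the adjugate, so that `A * (cof A)ᵀ = det A • 1`. -/
noncomputable def cof (A : Matrix (Fin 3) (Fin 3) ℝ) : Matrix (Fin 3) (Fin 3) ℝ :=
  (Matrix.adjugate A)ᵀ

/-- Jacobian matrix of `y` at `x`: entries `(∇y(x))_{kp} = ∂y_k/∂x_p(x)`. -/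
noncomputable def jac (y : (Fin 3 → ℝ) → Fin 3 → ℝ) (x : Fin 3 → ℝ) :
    Matrix (Fin 3) (Fin 3) ℝ :=
  Matrix.of fun k p => fderiv ℝ y x (Pi.single p 1) k

/-- Partial derivative of a scalar function in the `j`-th coordinate direction. -/
noncomputable def pd (j : Fin 3) (f : (Fin 3 → ℝ) → ℝ) (x : Fin 3 → ℝ) : ℝ :=
  fderiv ℝ f x (Pi.single j 1)

private lemma cof_apply (A : Matrix (Fin 3) (Fin 3) ℝ) (i j : Fin 3) :
    cof A i j = A (i+1) (j+1) * A (i+2) (j+2) - A (i+1) (j+2) * A (i+2) (j+1) := by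
  fin_cases i <;> fin_cases j <;>
    simp [cof, Matrix.adjugate_fin_three, Matrix.transpose_apply] <;> ring

private lemma piola_alg (G : Fin 3 → Fin 3 → ℝ) (H : Fin 3 → Fin 3 → Fin 3 → ℝ)
    (hs : ∀ k p j, H k p j = H k j p) (i : Fin 3) :
    ∑ j : Fin 3, (H (i+1) (j+1) j * G (i+2) (j+2) + G (i+1) (j+1) * H (i+2) (j+2) j
      - (H (i+1) (j+2) j * G (i+2) (j+1) + G (i+1) (j+2) * H (i+2) (j+1) j)) = 0 := by
  simp only [Fin.sum_univ_three, Fin.reduceAdd]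
  linear_combination G (i+2) 2 * hs (i+1) 1 0 + G (i+1) 1 * hs (i+2) 2 0
    - G (i+2) 1 * hs (i+1) 2 0 - G (i+1) 2 * hs (i+2) 1 0
    + G (i+2) 0 * hs (i+1) 2 1 - G (i+1) 0 * hs (i+2) 2 1

section
variable (y : (Fin 3 → ℝ) → Fin 3 → ℝ)

/-- The CLM sending `L` to `L (Pi.single p 1) k`. -/
private noncomputable def Phi (p k : Fin 3) :
    ((Fin 3 → ℝ) →L[ℝ] (Fin 3 → ℝ)) →L[ℝ] ℝ :=
  (ContinuousLinearMap.proj k).comp (ContinuousLinearMap.apply ℝ (Fin 3 → ℝ) (Pi.single p 1))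

private lemma G_eq (k p : Fin 3) : (fun z => jac y z k p) = (Phi p k) ∘ (fderiv ℝ y) := rfl

private lemma G_contDiff (hy : ContDiff ℝ 2 y) (k p : Fin 3) :
    ContDiff ℝ 1 fun z => jac y z k p := by
  rw [G_eq]
  exact (Phi p k).contDiff.comp (hy.fderiv_right (le_refl _))

private lemma pdG (hy : ContDiff ℝ 2 y) (k p j : Fin 3) (x : Fin 3 → ℝ) :
    pd j (fun z => jac y z k p) x = fderiv ℝ (fderiv ℝ y) x (Pi.single j 1) (Pi.single p 1) k := by
  have hd : DifferentiableAt ℝ (fderiv ℝ y) x :=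
    ((hy.fderiv_right (m := 1) (le_refl _)).differentiable one_ne_zero) x
  have := ((Phi p k).hasFDerivAt.comp x hd.hasFDerivAt).fderiv
  rw [pd, G_eq, this]
  rfl

private lemma pdG_symm (hy : ContDiff ℝ 2 y) (k p j : Fin 3) (x : Fin 3 → ℝ) :
    pd j (fun z => jac y z k p) x = pd p (fun z => jac y z k j) x := by
  rw [pdG y hy, pdG y hy]
  have h := hy.contDiffAt.isSymmSndFDerivAt (by norm_num) (x := x)
  rw [h (Pi.single j 1) (Pi.single p 1)]

private lemma f_diff (hy : ContDiff ℝ 2 y) (i : Fin 3) (x : Fin 3 → ℝ) :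
    DifferentiableAt ℝ (fun z => y z i) x :=
  ((ContinuousLinearMap.proj i : (Fin 3 → ℝ) →L[ℝ] ℝ).differentiableAt).comp x
    ((hy.differentiable two_ne_zero) x)

private lemma pd_f (hy : ContDiff ℝ 2 y) (i j : Fin 3) (x : Fin 3 → ℝ) :
    pd j (fun z => y z i) x = jac y x i j := by
  have hd : DifferentiableAt ℝ y x := (hy.differentiable two_ne_zero) x
  have := (((ContinuousLinearMap.proj i : (Fin 3 → ℝ) →L[ℝ] ℝ).hasFDerivAt).comp x
    hd.hasFDerivAt).fderiv
  rw [pd]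
  show fderiv ℝ ((ContinuousLinearMap.proj i : (Fin 3 → ℝ) →L[ℝ] ℝ) ∘ y) x (Pi.single j 1) = _
  rw [this]; rfl

end

private lemma pd_mul {f g : (Fin 3 → ℝ) → ℝ} {x : Fin 3 → ℝ} (hf : DifferentiableAt ℝ f x)
    (hg : DifferentiableAt ℝ g x) (j : Fin 3) :
    pd j (fun z => f z * g z) x = pd j f x * g x + f x * pd j g x := by
  simp only [pd, fderiv_fun_mul hf hg, ContinuousLinearMap.add_apply,
    ContinuousLinearMap.smul_apply, smul_eq_mul]
  ring

private lemma pd_sub {f g : (Fin 3 → ℝ) → ℝ} {x : Fin 3 → ℝ} (hf : DifferentiableAt ℝ f x)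
    (hg : DifferentiableAt ℝ g x) (j : Fin 3) :
    pd j (fun z => f z - g z) x = pd j f x - pd j g x := by
  simp [pd, fderiv_fun_sub hf hg]

private lemma trace_row (A : Matrix (Fin 3) (Fin 3) ℝ) (i : Fin 3) :
    ∑ j : Fin 3, A i j * cof A i j = A.det := by
  have h := congrFun (congrFun (Matrix.mul_adjugate A) i) i
  simpa [Matrix.mul_apply, cof, Matrix.transpose_apply, Matrix.smul_apply,
    Matrix.one_apply] using h

/-- Divergence-form representation of the determinant:
`det ∇y(x) = (1/3) ∑_{i,j} ∂_j (y_i (cof ∇y)_{ij})(x)` for a C² map `y`. -/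
theorem det_jac_eq_div_form (y : (Fin 3 → ℝ) → Fin 3 → ℝ) (hy : ContDiff ℝ 2 y)
    (x : Fin 3 → ℝ) :
    (jac y x).det =
      (1 / 3) * ∑ i : Fin 3, ∑ j : Fin 3,
        pd j (fun z => y z i * cof (jac y z) i j) x := by
  have hGd : ∀ k p, DifferentiableAt ℝ (fun z => jac y z k p) x :=
    fun k p => ((G_contDiff y hy k p).differentiable one_ne_zero) x
  have key : ∀ i j : Fin 3, pd j (fun z => y z i * cof (jac y z) i j) x
      = jac y x i j * cof (jac y x) i j
        + y x i * (pd j (fun z => jac y z (i+1) (j+1)) x * jac y x (i+2) (j+2)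
            + jac y x (i+1) (j+1) * pd j (fun z => jac y z (i+2) (j+2)) x
            - (pd j (fun z => jac y z (i+1) (j+2)) x * jac y x (i+2) (j+1)
               + jac y x (i+1) (j+2) * pd j (fun z => jac y z (i+2) (j+1)) x)) := by
    intro i j
    have hrw : (fun z => y z i * cof (jac y z) i j)
        = fun z => y z i * (jac y z (i+1) (j+1) * jac y z (i+2) (j+2)
            - jac y z (i+1) (j+2) * jac y z (i+2) (j+1)) := by
      funext z; rw [cof_apply]
    rw [hrw,
      pd_mul (f_diff y hy i x)
        (((hGd _ _).fun_mul (hGd _ _)).fun_sub ((hGd _ _).fun_mul (hGd _ _))) j,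
      pd_sub ((hGd _ _).fun_mul (hGd _ _)) ((hGd _ _).fun_mul (hGd _ _)) j,
      pd_mul (hGd _ _) (hGd _ _) j, pd_mul (hGd _ _) (hGd _ _) j,
      pd_f y hy i j, cof_apply]
  have hsum : ∑ i : Fin 3, ∑ j : Fin 3,
      pd j (fun z => y z i * cof (jac y z) i j) x = 3 * (jac y x).det := by
    have : ∀ i : Fin 3, ∑ j : Fin 3,
        pd j (fun z => y z i * cof (jac y z) i j) x = (jac y x).det := by
      intro i
      rw [Finset.sum_congr rfl fun j _ => key i j, Finset.sum_add_distrib,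
        trace_row, ← Finset.mul_sum,
        piola_alg (fun k p => jac y x k p)
          (fun k p j => pd j (fun z => jac y z k p) x)
          (fun k p j => pdG_symm y hy k p j x) i]
      ring
    rw [Finset.sum_congr rfl fun i _ => this i]
    simp [Fin.sum_univ_three]
  rw [hsum]; ring
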